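/- For all real numbers x₀ and u, the logistic log-partition function g(x) = log(1+eˣ) satisfies g''(x₀)(e^{-|u|} + |u| - 1) ≤ g(x₀+u) - g(x₀) - g'(x₀)u ≤ g''(x₀)(e^{|u|} - |u| - 1). -/

import Mathlib

open Real

/-- If `f 0 = 0`, `f' 0 = 0`, and `f'' ≥ 0` on `[0,∞)`, then `f ≥ 0` on `[0,∞)`. -/
lemma nonneg_of_convex_right {f f' f'' : ℝ → ℝ}
    (hf : ∀ t, HasDerivAt f (f' t) t) (hf' : ∀ t, HasDerivAt f' (f'' t) t)
    (h0 : f 0 = 0) (h0' : f' 0 = 0) (h2 : ∀ t, 0 ≤ t → 0 ≤ f'' t)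
    {u : ℝ} (hu : 0 ≤ u) : 0 ≤ f u := by
  have m' : MonotoneOn f' (Set.Ici 0) := by
    apply monotoneOn_of_deriv_nonneg (convex_Ici 0)
      (fun t _ => (hf' t).continuousAt.continuousWithinAt)
      (fun t _ => (hf' t).differentiableAt.differentiableWithinAt)
    intro t ht
    rw [interior_Ici] at ht
    rw [(hf' t).deriv]
    exact h2 t (le_of_lt ht)
  have hf'nonneg : ∀ t ∈ Set.Ici (0:ℝ), 0 ≤ f' t := by
    intro t ht
    have := m' (Set.self_mem_Ici) ht ht
    rwa [h0'] at this
  have m : MonotoneOn f (Set.Ici 0) := by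
    apply monotoneOn_of_deriv_nonneg (convex_Ici 0)
      (fun t _ => (hf t).continuousAt.continuousWithinAt)
      (fun t _ => (hf t).differentiableAt.differentiableWithinAt)
    intro t ht
    rw [interior_Ici] at ht
    rw [(hf t).deriv]
    exact hf'nonneg t (Set.mem_Ici.2 (le_of_lt ht))
  have := m Set.self_mem_Ici hu hu
  rwa [h0] at this

/-- If `f 0 = 0`, `f' 0 = 0`, and `f'' ≥ 0` on `(-∞,0]`, then `f ≥ 0` on `(-∞,0]`. -/
lemma nonneg_of_convex_left {f f' f'' : ℝ → ℝ}
    (hf : ∀ t, HasDerivAt f (f' t) t) (hf' : ∀ t, HasDerivAt f' (f'' t) t)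
    (h0 : f 0 = 0) (h0' : f' 0 = 0) (h2 : ∀ t, t ≤ 0 → 0 ≤ f'' t)
    {u : ℝ} (hu : u ≤ 0) : 0 ≤ f u := by
  have m' : MonotoneOn f' (Set.Iic 0) := by
    apply monotoneOn_of_deriv_nonneg (convex_Iic 0)
      (fun t _ => (hf' t).continuousAt.continuousWithinAt)
      (fun t _ => (hf' t).differentiableAt.differentiableWithinAt)
    intro t ht
    rw [interior_Iic] at ht
    rw [(hf' t).deriv]
    exact h2 t (le_of_lt ht)
  have hf'nonpos : ∀ t ∈ Set.Iic (0:ℝ), f' t ≤ 0 := by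
    intro t ht
    have := m' ht (Set.self_mem_Iic) ht
    rwa [h0'] at this
  have m : AntitoneOn f (Set.Iic 0) := by
    apply antitoneOn_of_deriv_nonpos (convex_Iic 0)
      (fun t _ => (hf t).continuousAt.continuousWithinAt)
      (fun t _ => (hf t).differentiableAt.differentiableWithinAt)
    intro t ht
    rw [interior_Iic] at ht
    rw [(hf t).deriv]
    exact hf'nonpos t (Set.mem_Iic.2 (le_of_lt ht))
  have := m hu Set.self_mem_Iic hu
  rwa [h0] at this

lemma hasDeriv_L (c : ℝ) (hc : 0 < c) (t : ℝ) :
    HasDerivAt (fun t => Real.log (1 + c * Real.exp t))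
      (c * Real.exp t / (1 + c * Real.exp t)) t := by
  have h : HasDerivAt (fun t => 1 + c * Real.exp t) (c * Real.exp t) t :=
    ((Real.hasDerivAt_exp t).const_mul c).const_add 1
  have := h.log (by positivity)
  simpa using this

lemma hasDeriv_P (c : ℝ) (hc : 0 < c) (t : ℝ) :
    HasDerivAt (fun t => c * Real.exp t / (1 + c * Real.exp t))
      (c * Real.exp t / (1 + c * Real.exp t) ^ 2) t := by
  have h1 : HasDerivAt (fun t => c * Real.exp t) (c * Real.exp t) t :=
    (Real.hasDerivAt_exp t).const_mul c
  have h2 : HasDerivAt (fun t => 1 + c * Real.exp t) (c * Real.exp t) t :=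
    h1.const_add 1
  have := h1.div h2 (by positivity)
  convert this using 1
  have : (0:ℝ) < 1 + c * Real.exp t := by positivity
  · rfl
  · rfl
  · rfl
  · ring

lemma hasDeriv_negexp (t : ℝ) :
    HasDerivAt (fun t => Real.exp (-t)) (-Real.exp (-t)) t := by
  have := (Real.hasDerivAt_exp (-t)).comp t (hasDerivAt_neg t)
  simpa [mul_comm, Function.comp_def] using this

lemma upper_right (c : ℝ) (hc : 0 < c) {u : ℝ} (hu : 0 ≤ u) :
    Real.log (1 + c * Real.exp u) - Real.log (1 + c) - c / (1 + c) * u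
      ≤ c / (1 + c) ^ 2 * (Real.exp u - u - 1) := by
  have h1c : (0:ℝ) < 1 + c := by linarith
  have h := nonneg_of_convex_right
    (f := fun t => c / (1 + c) ^ 2 * (Real.exp t - t - 1)
      - (Real.log (1 + c * Real.exp t) - Real.log (1 + c) - c / (1 + c) * t))
    (f' := fun t => c / (1 + c) ^ 2 * (Real.exp t - 1)
      - (c * Real.exp t / (1 + c * Real.exp t) - c / (1 + c)))
    (f'' := fun t => c / (1 + c) ^ 2 * Real.exp t - c * Real.exp t / (1 + c * Real.exp t) ^ 2)
    (fun t => by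
      have hA : HasDerivAt (fun t : ℝ => Real.exp t - t - 1) (Real.exp t - 1) t := by
        simpa using ((Real.hasDerivAt_exp t).sub (hasDerivAt_id t)).sub_const 1
      have hB : HasDerivAt (fun t : ℝ => Real.log (1 + c * Real.exp t) - Real.log (1 + c)
          - c / (1 + c) * t) (c * Real.exp t / (1 + c * Real.exp t) - c / (1 + c)) t := by
        have := ((hasDeriv_L c hc t).sub_const (Real.log (1 + c))).sub
          ((hasDerivAt_id t).const_mul (c / (1 + c)))
        simpa [Pi.sub_def] using this
      exact (hA.const_mul _).sub hB)
    (fun t => by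
      have hA : HasDerivAt (fun t : ℝ => Real.exp t - 1) (Real.exp t) t := by
        simpa using (Real.hasDerivAt_exp t).sub_const 1
      exact (hA.const_mul _).sub ((hasDeriv_P c hc t).sub_const (c / (1 + c))))
    (by simp) (by simp)
    (fun t ht => by
      have hE : 1 ≤ Real.exp t := Real.one_le_exp ht
      have h2 : (0:ℝ) < 1 + c * Real.exp t := by positivity
      have key : c * Real.exp t / (1 + c * Real.exp t) ^ 2 ≤ c * Real.exp t / (1 + c) ^ 2 := by
        apply div_le_div_of_nonneg_left (by positivity) (by positivity)
        nlinarith [mul_nonneg hc.le (sub_nonneg.2 hE), Real.exp_pos t,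
          mul_nonneg (mul_nonneg hc.le hc.le) (sub_nonneg.2 hE),
          mul_nonneg (mul_nonneg (mul_nonneg hc.le hc.le) (Real.exp_pos t).le) (sub_nonneg.2 hE)]
      have e : c / (1 + c) ^ 2 * Real.exp t = c * Real.exp t / (1 + c) ^ 2 := by ring
      linarith) hu
  linarith

lemma lower_right (c : ℝ) (hc : 0 < c) {u : ℝ} (hu : 0 ≤ u) :
    c / (1 + c) ^ 2 * (Real.exp (-u) + u - 1)
      ≤ Real.log (1 + c * Real.exp u) - Real.log (1 + c) - c / (1 + c) * u := by
  have h1c : (0:ℝ) < 1 + c := by linarith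
  have h := nonneg_of_convex_right
    (f := fun t => (Real.log (1 + c * Real.exp t) - Real.log (1 + c) - c / (1 + c) * t)
      - c / (1 + c) ^ 2 * (Real.exp (-t) + t - 1))
    (f' := fun t => (c * Real.exp t / (1 + c * Real.exp t) - c / (1 + c))
      - c / (1 + c) ^ 2 * (-Real.exp (-t) + 1))
    (f'' := fun t => c * Real.exp t / (1 + c * Real.exp t) ^ 2 - c / (1 + c) ^ 2 * Real.exp (-t))
    (fun t => by
      have hA : HasDerivAt (fun t : ℝ => Real.exp (-t) + t - 1) (-Real.exp (-t) + 1) t := by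
        simpa using ((hasDeriv_negexp t).add (hasDerivAt_id t)).sub_const 1
      have hB : HasDerivAt (fun t : ℝ => Real.log (1 + c * Real.exp t) - Real.log (1 + c)
          - c / (1 + c) * t) (c * Real.exp t / (1 + c * Real.exp t) - c / (1 + c)) t := by
        have := ((hasDeriv_L c hc t).sub_const (Real.log (1 + c))).sub
          ((hasDerivAt_id t).const_mul (c / (1 + c)))
        simpa [Pi.sub_def] using this
      exact hB.sub (hA.const_mul _))
    (fun t => by
      have hA : HasDerivAt (fun t : ℝ => -Real.exp (-t) + 1) (Real.exp (-t)) t := by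
        simpa using (hasDeriv_negexp t).neg.add_const 1
      exact ((hasDeriv_P c hc t).sub_const (c / (1 + c))).sub (hA.const_mul _))
    (by simp) (by simp)
    (fun t ht => by
      have hE : 1 ≤ Real.exp t := Real.one_le_exp ht
      have h2 : (0:ℝ) < 1 + c * Real.exp t := by positivity
      have hEI : Real.exp (-t) * Real.exp t = 1 := by rw [← Real.exp_add]; simp
      have hEIpos : (0:ℝ) < Real.exp (-t) := Real.exp_pos _
      have key : c / (1 + c) ^ 2 * Real.exp (-t) ≤ c * Real.exp t / (1 + c * Real.exp t) ^ 2 := by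
        rw [div_mul_eq_mul_div, div_le_div_iff₀ (by positivity) (by positivity)]
        have hle1 : Real.exp (-t) ≤ 1 := Real.exp_le_one_iff.mpr (by linarith)
        have expand : c * Real.exp (-t) * (1 + c * Real.exp t) ^ 2
            = c * Real.exp (-t) + 2 * c ^ 2 * (Real.exp (-t) * Real.exp t)
              + c ^ 3 * (Real.exp (-t) * Real.exp t) * Real.exp t := by ring
        rw [hEI] at expand
        have rexpand : c * Real.exp t * (1 + c) ^ 2
            = c * Real.exp t + 2 * c ^ 2 * Real.exp t + c ^ 3 * Real.exp t := by ring
        have t1 : c * Real.exp (-t) ≤ c * Real.exp t := by nlinarith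
        have t2 : 2 * c ^ 2 ≤ 2 * c ^ 2 * Real.exp t := by nlinarith
        linarith [expand, rexpand, t1, t2]
      linarith) hu
  linarith

lemma upper_left (c : ℝ) (hc : 0 < c) {u : ℝ} (hu : u ≤ 0) :
    Real.log (1 + c * Real.exp u) - Real.log (1 + c) - c / (1 + c) * u
      ≤ c / (1 + c) ^ 2 * (Real.exp (-u) + u - 1) := by
  have h1c : (0:ℝ) < 1 + c := by linarith
  have h := nonneg_of_convex_left
    (f := fun t => c / (1 + c) ^ 2 * (Real.exp (-t) + t - 1)
      - (Real.log (1 + c * Real.exp t) - Real.log (1 + c) - c / (1 + c) * t))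
    (f' := fun t => c / (1 + c) ^ 2 * (-Real.exp (-t) + 1)
      - (c * Real.exp t / (1 + c * Real.exp t) - c / (1 + c)))
    (f'' := fun t => c / (1 + c) ^ 2 * Real.exp (-t) - c * Real.exp t / (1 + c * Real.exp t) ^ 2)
    (fun t => by
      have hA : HasDerivAt (fun t : ℝ => Real.exp (-t) + t - 1) (-Real.exp (-t) + 1) t := by
        simpa using ((hasDeriv_negexp t).add (hasDerivAt_id t)).sub_const 1
      have hB : HasDerivAt (fun t : ℝ => Real.log (1 + c * Real.exp t) - Real.log (1 + c)
          - c / (1 + c) * t) (c * Real.exp t / (1 + c * Real.exp t) - c / (1 + c)) t := by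
        have := ((hasDeriv_L c hc t).sub_const (Real.log (1 + c))).sub
          ((hasDerivAt_id t).const_mul (c / (1 + c)))
        simpa [Pi.sub_def] using this
      exact (hA.const_mul _).sub hB)
    (fun t => by
      have hA : HasDerivAt (fun t : ℝ => -Real.exp (-t) + 1) (Real.exp (-t)) t := by
        simpa using (hasDeriv_negexp t).neg.add_const 1
      exact (hA.const_mul _).sub ((hasDeriv_P c hc t).sub_const (c / (1 + c))))
    (by simp) (by simp)
    (fun t ht => by
      have hE : Real.exp t ≤ 1 := Real.exp_le_one_iff.mpr ht
      have hEpos : (0:ℝ) < Real.exp t := Real.exp_pos _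
      have h2 : (0:ℝ) < 1 + c * Real.exp t := by positivity
      have hEI : Real.exp (-t) * Real.exp t = 1 := by rw [← Real.exp_add]; simp
      have hge1 : 1 ≤ Real.exp (-t) := Real.one_le_exp (by linarith)
      have key : c * Real.exp t / (1 + c * Real.exp t) ^ 2 ≤ c / (1 + c) ^ 2 * Real.exp (-t) := by
        rw [div_mul_eq_mul_div, div_le_div_iff₀ (by positivity) (by positivity)]
        have expand : c * Real.exp (-t) * (1 + c * Real.exp t) ^ 2
            = c * Real.exp (-t) + 2 * c ^ 2 * (Real.exp (-t) * Real.exp t)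
              + c ^ 3 * (Real.exp (-t) * Real.exp t) * Real.exp t := by ring
        rw [hEI] at expand
        have rexpand : c * Real.exp t * (1 + c) ^ 2
            = c * Real.exp t + 2 * c ^ 2 * Real.exp t + c ^ 3 * Real.exp t := by ring
        have t1 : c * Real.exp t ≤ c * Real.exp (-t) := by nlinarith
        have t2 : 2 * c ^ 2 * Real.exp t ≤ 2 * c ^ 2 := by nlinarith
        linarith [expand, rexpand, t1, t2]
      linarith) hu
  linarith

lemma lower_left (c : ℝ) (hc : 0 < c) {u : ℝ} (hu : u ≤ 0) :
    c / (1 + c) ^ 2 * (Real.exp u - u - 1)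
      ≤ Real.log (1 + c * Real.exp u) - Real.log (1 + c) - c / (1 + c) * u := by
  have h1c : (0:ℝ) < 1 + c := by linarith
  have h := nonneg_of_convex_left
    (f := fun t => (Real.log (1 + c * Real.exp t) - Real.log (1 + c) - c / (1 + c) * t)
      - c / (1 + c) ^ 2 * (Real.exp t - t - 1))
    (f' := fun t => (c * Real.exp t / (1 + c * Real.exp t) - c / (1 + c))
      - c / (1 + c) ^ 2 * (Real.exp t - 1))
    (f'' := fun t => c * Real.exp t / (1 + c * Real.exp t) ^ 2 - c / (1 + c) ^ 2 * Real.exp t)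
    (fun t => by
      have hA : HasDerivAt (fun t : ℝ => Real.exp t - t - 1) (Real.exp t - 1) t := by
        simpa using ((Real.hasDerivAt_exp t).sub (hasDerivAt_id t)).sub_const 1
      have hB : HasDerivAt (fun t : ℝ => Real.log (1 + c * Real.exp t) - Real.log (1 + c)
          - c / (1 + c) * t) (c * Real.exp t / (1 + c * Real.exp t) - c / (1 + c)) t := by
        have := ((hasDeriv_L c hc t).sub_const (Real.log (1 + c))).sub
          ((hasDerivAt_id t).const_mul (c / (1 + c)))
        simpa [Pi.sub_def] using this
      exact hB.sub (hA.const_mul _))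
    (fun t => by
      have hA : HasDerivAt (fun t : ℝ => Real.exp t - 1) (Real.exp t) t := by
        simpa using (Real.hasDerivAt_exp t).sub_const 1
      exact ((hasDeriv_P c hc t).sub_const (c / (1 + c))).sub (hA.const_mul _))
    (by simp) (by simp)
    (fun t ht => by
      have hE : Real.exp t ≤ 1 := Real.exp_le_one_iff.mpr ht
      have hEpos : (0:ℝ) < Real.exp t := Real.exp_pos _
      have h2 : (0:ℝ) < 1 + c * Real.exp t := by positivity
      have key : c * Real.exp t / (1 + c) ^ 2 ≤ c * Real.exp t / (1 + c * Real.exp t) ^ 2 := by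
        apply div_le_div_of_nonneg_left (by positivity) (by positivity)
        nlinarith [mul_nonneg hc.le (sub_nonneg.2 hE), Real.exp_pos t,
          mul_nonneg (mul_nonneg hc.le hc.le) (sub_nonneg.2 hE),
          mul_nonneg (mul_nonneg (mul_nonneg hc.le hc.le) (Real.exp_pos t).le) (sub_nonneg.2 hE)]
      have e : c / (1 + c) ^ 2 * Real.exp t = c * Real.exp t / (1 + c) ^ 2 := by ring
      linarith) hu
  linarith

/-- Self-concordance property of the logistic log-partition function
`g(x) = log(1 + exp x)` (Bach 2010, Lemma 1), with
`g'(x) = exp x / (1 + exp x)` and `g''(x) = exp x / (1 + exp x)^2`. -/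
theorem logistic_self_concordant (x₀ u : ℝ) :
    Real.exp x₀ / (1 + Real.exp x₀) ^ 2 * (Real.exp (-|u|) + |u| - 1)
      ≤ Real.log (1 + Real.exp (x₀ + u)) - Real.log (1 + Real.exp x₀)
          - Real.exp x₀ / (1 + Real.exp x₀) * u
    ∧ Real.log (1 + Real.exp (x₀ + u)) - Real.log (1 + Real.exp x₀)
          - Real.exp x₀ / (1 + Real.exp x₀) * u
      ≤ Real.exp x₀ / (1 + Real.exp x₀) ^ 2 * (Real.exp |u| - |u| - 1) := by
  set c := Real.exp x₀ with hcdef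
  have hc : 0 < c := Real.exp_pos x₀
  have hsplit : Real.exp (x₀ + u) = c * Real.exp u := by rw [Real.exp_add]
  rw [hsplit]
  rcases le_or_gt 0 u with hu | hu
  · rw [abs_of_nonneg hu]
    exact ⟨lower_right c hc hu, upper_right c hc hu⟩
  · rw [abs_of_neg hu]
    have h1 := lower_left c hc hu.le
    have h2 := upper_left c hc hu.le
    constructor
    · have e : Real.exp (-(-u)) + -u - 1 = Real.exp u - u - 1 := by rw [neg_neg]; ring
      rw [e]
      exact h1
    · have e : Real.exp (-u) - -u - 1 = Real.exp (-u) + u - 1 := by ring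
      rw [e]
      exact h2
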